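/- For ν > 0 and α ∈ ℝ with 2|α| < ν, the polynomials I_n evaluated at (z, z̄) with ξ = 0 satisfy the orthogonality relation ∫_ℂ I_m(z,z̄|0) · conj(I_n(z,z̄|0)) · exp(-ν|z|² + α(z² + z̄²)) dA(z) = (π ν^n n! / √(ν² - 4α²)) · δ_{m,n}, where dA is Lebesgue measure on ℂ ≅ ℝ². -/

import Mathlib

open Complex

noncomputable def Ic (ν α ξ z w : ℂ) : ℕ → ℂ
  | 0 => 1
  | 1 => ν * w - 2 * α * z - ξ
  | (n + 2) => (ν * w - 2 * α * z - ξ) * Ic ν α ξ z w (n + 1)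
      + 2 * α * (n + 1) * Ic ν α ξ z w n

open MeasureTheory

namespace Stmt8

open Real Filter Topology

noncomputable def Fp (ν α : ℝ) (n : ℕ) (x y : ℝ) : ℂ :=
  Ic (ν:ℂ) (α:ℂ) 0 (x + y*I) (x - y*I) n

variable {ν α : ℝ}

lemma Fp_zero (x y : ℝ) : Fp ν α 0 x y = 1 := rfl

lemma Fp_succ (n : ℕ) (x y : ℝ) :
    Fp ν α (n+1) x y = ((ν:ℂ)*((x:ℂ) - y*I) - 2*α*((x:ℂ) + y*I)) * Fp ν α n x y
      + 2*α*n*Fp ν α (n-1) x y := by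
  cases n with
  | zero => simp [Fp, Ic]
  | succ k =>
    show Ic _ _ _ _ _ (k+2) = _
    rw [Ic]
    simp only [Fp, Nat.add_sub_cancel]
    push_cast
    ring

lemma hasDerivAt_Fp_x (n : ℕ) (x y : ℝ) :
    HasDerivAt (fun t : ℝ => Fp ν α n t y)
      (((ν:ℂ) - 2*α) * n * Fp ν α (n-1) x y) x := by
  have hcoe : HasDerivAt (fun t : ℝ => (t:ℂ)) 1 x := Complex.ofRealCLM.hasDerivAt
  have hc : HasDerivAt (fun t : ℝ => ((ν:ℂ)*((t:ℂ) - y*I) - 2*α*((t:ℂ) + y*I)))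
      ((ν:ℂ) - 2*α) x := by
    have h1 := ((hcoe.sub_const ((y:ℂ)*I)).const_mul (ν:ℂ)).sub
      ((hcoe.add_const ((y:ℂ)*I)).const_mul (2*(α:ℂ)))
    exact h1.congr_deriv (by ring)
  induction n using Nat.strong_induction_on with
  | _ n ih =>
    match n with
    | 0 => simpa [Fp_zero] using hasDerivAt_const x (1:ℂ)
    | 1 =>
      have : (fun t : ℝ => Fp ν α 1 t y)
          = fun t : ℝ => ((ν:ℂ)*((t:ℂ) - y*I) - 2*α*((t:ℂ) + y*I)) := by
        funext t; show Ic _ _ _ _ _ 1 = _; rw [Ic]; ring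
      rw [this]
      simpa [Fp_zero] using hc
    | (n+2) =>
      have h1 := ih (n+1) (by omega)
      have h0 := ih n (by omega)
      have key := (hc.mul h1).add (h0.const_mul (2*(α:ℂ)*((n:ℂ)+1)))
      have : (fun t : ℝ => Fp ν α (n+2) t y)
          = fun t : ℝ => ((ν:ℂ)*((t:ℂ) - y*I) - 2*α*((t:ℂ) + y*I)) * Fp ν α (n+1) t y
              + 2*α*((n:ℂ)+1)*Fp ν α n t y := by
        funext t
        have := Fp_succ (ν := ν) (α := α) (n+1) t y
        simpa [Nat.add_sub_cancel] using this
      rw [this]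
      refine key.congr_deriv ?_
      simp only [Nat.add_sub_cancel, show n+2-1 = n+1 from rfl]
      rw [Fp_succ (ν := ν) (α := α) n x y]
      push_cast
      ring

lemma hasDerivAt_Fp_y (n : ℕ) (x y : ℝ) :
    HasDerivAt (fun t : ℝ => Fp ν α n x t)
      ((-I*((ν:ℂ) + 2*α)) * n * Fp ν α (n-1) x y) y := by
  have hcoe : HasDerivAt (fun t : ℝ => (t:ℂ)) 1 y := Complex.ofRealCLM.hasDerivAt
  have hc : HasDerivAt (fun t : ℝ => ((ν:ℂ)*((x:ℂ) - t*I) - 2*α*((x:ℂ) + t*I)))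
      (-I*((ν:ℂ) + 2*α)) y := by
    have h1 := (((hcoe.mul_const I).const_sub (x:ℂ)).const_mul (ν:ℂ)).sub
      (((hcoe.mul_const I).const_add (x:ℂ)).const_mul (2*(α:ℂ)))
    refine h1.congr_deriv ?_
    ring
  induction n using Nat.strong_induction_on with
  | _ n ih =>
    match n with
    | 0 => simpa [Fp_zero] using hasDerivAt_const y (1:ℂ)
    | 1 =>
      have : (fun t : ℝ => Fp ν α 1 x t)
          = fun t : ℝ => ((ν:ℂ)*((x:ℂ) - t*I) - 2*α*((x:ℂ) + t*I)) := by
        funext t; show Ic _ _ _ _ _ 1 = _; rw [Ic]; ring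
      rw [this]
      simpa [Fp_zero] using hc
    | (n+2) =>
      have h1 := ih (n+1) (by omega)
      have h0 := ih n (by omega)
      have key := (hc.mul h1).add (h0.const_mul (2*(α:ℂ)*((n:ℂ)+1)))
      have : (fun t : ℝ => Fp ν α (n+2) x t)
          = fun t : ℝ => ((ν:ℂ)*((x:ℂ) - t*I) - 2*α*((x:ℂ) + t*I)) * Fp ν α (n+1) x t
              + 2*α*((n:ℂ)+1)*Fp ν α n x t := by
        funext t
        have := Fp_succ (ν := ν) (α := α) (n+1) x t
        simpa [Nat.add_sub_cancel] using this
      rw [this]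
      refine key.congr_deriv ?_
      simp only [Nat.add_sub_cancel, show n+2-1 = n+1 from rfl]
      rw [Fp_succ (ν := ν) (α := α) n x y]
      push_cast
      ring


lemma conj_Ic (ν α : ℝ) (z w : ℂ) (n : ℕ) :
    (starRingEnd ℂ) (Ic (ν:ℂ) (α:ℂ) 0 z w n)
      = Ic (ν:ℂ) (α:ℂ) 0 ((starRingEnd ℂ) z) ((starRingEnd ℂ) w) n := by
  induction n using Nat.strong_induction_on with
  | _ n ih =>
    match n with
    | 0 => simp [Ic]
    | 1 => simp only [Ic, map_sub, map_mul, map_zero, map_ofNat, Complex.conj_ofReal]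
    | (n+2) =>
      rw [Ic, Ic]
      simp only [map_add, map_mul, map_sub, map_ofNat, Complex.conj_ofReal, map_natCast,
        map_zero, map_one, ih (n+1) (by omega), ih n (by omega)]

lemma conj_Fp (n : ℕ) (x y : ℝ) :
    (starRingEnd ℂ) (Fp ν α n x y) = Fp ν α n x (-y) := by
  unfold Fp
  rw [conj_Ic]
  push_cast
  congr 1 <;> simp [Complex.ext_iff]

lemma continuous_Fp (n : ℕ) : Continuous (fun p : ℝ × ℝ => Fp ν α n p.1 p.2) := by
  induction n using Nat.strong_induction_on with
  | _ n ih =>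
    match n with
    | 0 => simp only [Fp_zero]; exact continuous_const
    | 1 =>
      have : (fun p : ℝ × ℝ => Fp ν α 1 p.1 p.2)
          = fun p : ℝ × ℝ => ((ν:ℂ)*((p.1:ℂ) - p.2*I) - 2*α*((p.1:ℂ) + p.2*I)) := by
        funext p; show Ic _ _ _ _ _ 1 = _; rw [Ic]; ring
      rw [this]; fun_prop
    | (n+2) =>
      have : (fun p : ℝ × ℝ => Fp ν α (n+2) p.1 p.2)
          = fun p : ℝ × ℝ => ((ν:ℂ)*((p.1:ℂ) - p.2*I) - 2*α*((p.1:ℂ) + p.2*I)) * Fp ν α (n+1) p.1 p.2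
              + 2*α*((n:ℂ)+1)*Fp ν α n p.1 p.2 := by
        funext p
        simpa [Nat.add_sub_cancel] using Fp_succ (ν := ν) (α := α) (n+1) p.1 p.2
      rw [this]
      have h1 := ih (n+1) (by omega)
      have h0 := ih n (by omega)
      fun_prop

lemma Fp_bound (n : ℕ) : ∃ C : ℝ, 0 ≤ C ∧ ∀ x y : ℝ,
    ‖Fp ν α n x y‖ ≤ C * ((1+|x|)*(1+|y|))^n := by
  induction n using Nat.strong_induction_on with
  | _ n ih =>
    have hB : ∀ x y : ℝ, (1:ℝ) ≤ (1+|x|)*(1+|y|) := fun x y => by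
      nlinarith [abs_nonneg x, abs_nonneg y]
    have hBnn : ∀ x y : ℝ, (0:ℝ) ≤ (1+|x|)*(1+|y|) := fun x y => le_trans zero_le_one (hB x y)
    have hc : ∀ x y : ℝ, ‖((ν:ℂ)*((x:ℂ) - y*I) - 2*α*((x:ℂ) + y*I))‖
        ≤ (|ν| + 2*|α|) * ((1+|x|)*(1+|y|)) := by
      intro x y
      have h1 : ‖(x:ℂ) - y*I‖ ≤ |x| + |y| := by
        refine le_trans (norm_sub_le _ _) ?_
        simp [Complex.norm_real]
      have h2 : ‖(x:ℂ) + y*I‖ ≤ |x| + |y| := by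
        refine le_trans (norm_add_le _ _) ?_
        simp [Complex.norm_real]
      have h3 : |x| + |y| ≤ (1+|x|)*(1+|y|) := by
        nlinarith [abs_nonneg x, abs_nonneg y]
      have h4 : ‖(ν:ℂ)*((x:ℂ) - y*I)‖ ≤ |ν| * (|x|+|y|) := by
        rw [norm_mul, Complex.norm_real, Real.norm_eq_abs]
        exact mul_le_mul_of_nonneg_left h1 (abs_nonneg ν)
      have h5 : ‖2*(α:ℂ)*((x:ℂ)+y*I)‖ ≤ 2*|α| * (|x|+|y|) := by
        rw [show (2*(α:ℂ)) = ((2*α:ℝ):ℂ) by push_cast; ring]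
        rw [norm_mul, Complex.norm_real, Real.norm_eq_abs, abs_mul, _root_.abs_two]
        nlinarith [norm_nonneg ((x:ℂ)+y*I), abs_nonneg α]
      have h6 := norm_sub_le ((ν:ℂ)*((x:ℂ) - y*I)) (2*(α:ℂ)*((x:ℂ) + y*I))
      nlinarith [abs_nonneg ν, abs_nonneg α, abs_nonneg x, abs_nonneg y]
    match n with
    | 0 => exact ⟨1, zero_le_one, fun x y => by simp [Fp_zero]⟩
    | 1 =>
      refine ⟨|ν| + 2*|α|, by positivity, fun x y => ?_⟩
      have : Fp ν α 1 x y = ((ν:ℂ)*((x:ℂ) - y*I) - 2*α*((x:ℂ) + y*I)) := by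
        show Ic _ _ _ _ _ 1 = _; rw [Ic]; ring
      rw [this, pow_one]
      exact hc x y
    | (n+2) =>
      obtain ⟨C1, hC1nn, hC1⟩ := ih (n+1) (by omega)
      obtain ⟨C0, hC0nn, hC0⟩ := ih n (by omega)
      set K : ℝ := |ν| + 2*|α| with hK
      set D : ℝ := 2 * |α| * ((n:ℝ)+1) with hD
      have hKnn : 0 ≤ K := by positivity
      have hDnn : 0 ≤ D := by positivity
      refine ⟨K*C1 + D*C0, by positivity, fun x y => ?_⟩
      set B := (1+|x|)*(1+|y|) with hBdef
      have hB1 : (1:ℝ) ≤ B := hB x y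
      have hBnn' : (0:ℝ) ≤ B := hBnn x y
      have heq : Fp ν α (n+2) x y
          = ((ν:ℂ)*((x:ℂ) - y*I) - 2*α*((x:ℂ) + y*I)) * Fp ν α (n+1) x y
            + 2*α*((n:ℂ)+1)*Fp ν α n x y := by
        simpa [Nat.add_sub_cancel] using Fp_succ (ν := ν) (α := α) (n+1) x y
      have e1 : ‖((ν:ℂ)*((x:ℂ) - y*I) - 2*α*((x:ℂ) + y*I)) * Fp ν α (n+1) x y‖
          ≤ (K * B) * (C1 * B^(n+1)) := by
        rw [norm_mul]
        exact mul_le_mul (hc x y) (hC1 x y) (norm_nonneg _) (by positivity)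
      have e0 : ‖(2*(α:ℂ)*((n:ℂ)+1))*Fp ν α n x y‖ ≤ D * (C0 * B^n) := by
        rw [norm_mul]
        refine mul_le_mul ?_ (hC0 x y) (norm_nonneg _) hDnn
        rw [show (2*(α:ℂ)*((n:ℂ)+1)) = (((2*α*(n+1) : ℝ)):ℂ) by push_cast; ring]
        rw [Complex.norm_real, Real.norm_eq_abs, hD]
        rw [abs_mul, abs_mul]
        have : |((n:ℝ)+1)| = (n:ℝ)+1 := abs_of_nonneg (by positivity)
        rw [this, _root_.abs_two]
      have hpown : B^n ≤ B^(n+1) := pow_le_pow_right₀ hB1 (by omega)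
      rw [heq]
      calc ‖((ν:ℂ)*((x:ℂ) - y*I) - 2*α*((x:ℂ) + y*I)) * Fp ν α (n+1) x y
            + 2*α*((n:ℂ)+1)*Fp ν α n x y‖
          ≤ ‖((ν:ℂ)*((x:ℂ) - y*I) - 2*α*((x:ℂ) + y*I)) * Fp ν α (n+1) x y‖
            + ‖(2*(α:ℂ)*((n:ℂ)+1))*Fp ν α n x y‖ := norm_add_le _ _
        _ ≤ (K * B) * (C1 * B^(n+1)) + D * (C0 * B^n) := add_le_add e1 e0
        _ ≤ (K*C1) * B^(n+2) + (D*C0) * B^(n+2) := by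
            have t1 : (K * B) * (C1 * B^(n+1)) = (K*C1) * B^(n+2) := by ring
            rw [t1]
            have t3 : B^n ≤ B^(n+2) := pow_le_pow_right₀ hB1 (by omega)
            nlinarith [mul_le_mul_of_nonneg_left t3 (mul_nonneg hDnn hC0nn)]
        _ = (K*C1 + D*C0) * B^(n+2) := by ring


lemma polyGauss_tendsto_atTop {b : ℝ} (hb : 0 < b) (M : ℕ) :
    Tendsto (fun x : ℝ => (1+|x|)^M * Real.exp (-b*x^2)) atTop (𝓝 0) := by
  have h1 : Tendsto (fun x : ℝ => x/2) atTop atTop := tendsto_id.atTop_div_const two_pos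
  have h2 : Tendsto (fun x : ℝ => -(x/2)) atTop atBot := tendsto_neg_atTop_atBot.comp h1
  have hrg : Tendsto (fun x : ℝ => Real.exp (-(1/2) * x)) atTop (𝓝 0) := by
    have h4 := Real.tendsto_exp_atBot.comp h2
    have he : (fun x : ℝ => Real.exp (-(1/2) * x)) = Real.exp ∘ (fun x : ℝ => -(x/2)) := by
      funext x
      rw [Function.comp_apply, show -(1/2)*x = -(x/2) from by ring]
    rw [he]; exact h4
  have h0 : Tendsto (fun x : ℝ => x ^ (M:ℝ) * Real.exp (-b*x^2)) atTop (𝓝 0) :=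
    (rpow_mul_exp_neg_mul_sq_isLittleO_exp_neg hb (M:ℝ)).trans_tendsto hrg
  have h3 : Tendsto (fun x : ℝ => (2:ℝ)^M * (x ^ (M:ℝ) * Real.exp (-b*x^2))) atTop (𝓝 0) := by
    simpa using h0.const_mul ((2:ℝ)^M)
  refine squeeze_zero' ?_ ?_ h3
  · filter_upwards with x; positivity
  · filter_upwards [eventually_ge_atTop (1:ℝ)] with x hx
    have hx0 : 0 < x := by linarith
    have hle : (1+|x|)^M ≤ (2*x)^M := by
      apply pow_le_pow_left₀ (by positivity)
      rw [abs_of_pos hx0]; linarith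
    calc (1+|x|)^M * Real.exp (-b*x^2) ≤ (2*x)^M * Real.exp (-b*x^2) :=
          mul_le_mul_of_nonneg_right hle (Real.exp_pos _).le
      _ = 2^M * (x ^ (M:ℝ) * Real.exp (-b*x^2)) := by
          rw [mul_pow, Real.rpow_natCast]; ring

lemma polyGauss_tendsto_atBot {b : ℝ} (hb : 0 < b) (M : ℕ) :
    Tendsto (fun x : ℝ => (1+|x|)^M * Real.exp (-b*x^2)) atBot (𝓝 0) := by
  have h := (polyGauss_tendsto_atTop hb M).comp tendsto_neg_atBot_atTop
  have he : (fun x : ℝ => (1+|x|)^M * Real.exp (-b*x^2))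
      = (fun x : ℝ => (1+|x|)^M * Real.exp (-b*x^2)) ∘ (fun x : ℝ => -x) := by
    funext x; simp [Function.comp]
  rw [he]; exact h

lemma polyGauss_bounded {b : ℝ} (hb : 0 < b) (M : ℕ) :
    ∃ C : ℝ, 0 ≤ C ∧ ∀ x : ℝ, (1+|x|)^M * Real.exp (-b*x^2) ≤ C * Real.exp (-(b/2)*x^2) := by
  set u : ℝ → ℝ := fun x => (1+|x|)^M * Real.exp (-(b/2)*x^2) with hu
  have hcont : Continuous u := by fun_prop
  have htop := polyGauss_tendsto_atTop (half_pos hb) M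
  have hbot := polyGauss_tendsto_atBot (half_pos hb) M
  obtain ⟨A, hA⟩ := eventually_atTop.mp (htop.eventually_lt_const one_pos)
  obtain ⟨A', hA'⟩ := eventually_atBot.mp (hbot.eventually_lt_const one_pos)
  obtain ⟨C0, hC0⟩ := isCompact_Icc.exists_bound_of_continuousOn
    (s := Set.Icc A' A) hcont.continuousOn
  refine ⟨max C0 1, le_trans zero_le_one (le_max_right _ _), fun x => ?_⟩
  have key : u x ≤ max C0 1 := by
    by_cases h1 : x ≤ A'
    · exact le_trans (hA' x h1).le (le_max_right _ _)
    · by_cases h2 : A ≤ x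
      · exact le_trans (hA x h2).le (le_max_right _ _)
      · have hmem : x ∈ Set.Icc A' A := ⟨le_of_not_ge h1, le_of_not_ge h2⟩
        refine le_trans (le_trans (le_abs_self _) ?_) (le_max_left _ _)
        simpa [Real.norm_eq_abs] using hC0 x hmem
  have hsplit : Real.exp (-b*x^2) = Real.exp (-(b/2)*x^2) * Real.exp (-(b/2)*x^2) := by
    rw [← Real.exp_add]; ring_nf
  calc (1+|x|)^M * Real.exp (-b*x^2) = u x * Real.exp (-(b/2)*x^2) := by
        rw [hu, hsplit]; ring
    _ ≤ max C0 1 * Real.exp (-(b/2)*x^2) :=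
        mul_le_mul_of_nonneg_right key (Real.exp_pos _).le

def Poly1 (h : ℝ → ℂ) : Prop :=
  Continuous h ∧ ∃ C M, 0 ≤ C ∧ ∀ x : ℝ, ‖h x‖ ≤ C * (1+|x|)^M

lemma poly1_const (c : ℂ) : Poly1 (fun _ => c) :=
  ⟨continuous_const, ‖c‖, 0, norm_nonneg _, fun x => by simp⟩

lemma poly1_coe : Poly1 (fun x : ℝ => (x:ℂ)) := by
  refine ⟨by fun_prop, 1, 1, zero_le_one, fun x => ?_⟩
  rw [Complex.norm_real, Real.norm_eq_abs]
  nlinarith [abs_nonneg x]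

lemma Poly1.mul {f g : ℝ → ℂ} (hf : Poly1 f) (hg : Poly1 g) : Poly1 (fun x => f x * g x) := by
  obtain ⟨cf, Cf, Mf, hCf0, hCf⟩ := hf
  obtain ⟨cg, Cg, Mg, hCg0, hCg⟩ := hg
  refine ⟨cf.mul cg, Cf*Cg, Mf+Mg, by positivity, fun x => ?_⟩
  rw [norm_mul, pow_add]
  calc ‖f x‖ * ‖g x‖ ≤ (Cf * (1+|x|)^Mf) * (Cg * (1+|x|)^Mg) :=
        mul_le_mul (hCf x) (hCg x) (norm_nonneg _) (by positivity)
    _ = Cf*Cg * ((1+|x|)^Mf * (1+|x|)^Mg) := by ring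

lemma Poly1.add {f g : ℝ → ℂ} (hf : Poly1 f) (hg : Poly1 g) : Poly1 (fun x => f x + g x) := by
  obtain ⟨cf, Cf, Mf, hCf0, hCf⟩ := hf
  obtain ⟨cg, Cg, Mg, hCg0, hCg⟩ := hg
  have hb : ∀ x : ℝ, (1:ℝ) ≤ 1 + |x| := fun x => by nlinarith [abs_nonneg x]
  refine ⟨cf.add cg, Cf+Cg, Mf+Mg, by positivity, fun x => ?_⟩
  have e1 : (1+|x|)^Mf ≤ (1+|x|)^(Mf+Mg) := pow_le_pow_right₀ (hb x) (by omega)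
  have e2 : (1+|x|)^Mg ≤ (1+|x|)^(Mf+Mg) := pow_le_pow_right₀ (hb x) (by omega)
  calc ‖f x + g x‖ ≤ ‖f x‖ + ‖g x‖ := norm_add_le _ _
    _ ≤ Cf * (1+|x|)^(Mf+Mg) + Cg * (1+|x|)^(Mf+Mg) := by
        have := hCf x; have := hCg x
        nlinarith [mul_le_mul_of_nonneg_left e1 hCf0, mul_le_mul_of_nonneg_left e2 hCg0]
    _ = (Cf+Cg) * (1+|x|)^(Mf+Mg) := by ring

lemma Poly1.sub {f g : ℝ → ℂ} (hf : Poly1 f) (hg : Poly1 g) : Poly1 (fun x => f x - g x) := by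
  have := hf.add ((poly1_const (-1)).mul hg)
  simpa [sub_eq_add_neg, neg_one_mul] using this

lemma Poly1.integrable_gauss {h : ℝ → ℂ} (hP : Poly1 h) {b : ℝ} (hb : 0 < b) :
    Integrable (fun x => h x * ((Real.exp (-b*x^2) : ℝ) : ℂ)) := by
  obtain ⟨hc, C, M, hCnn, hC⟩ := hP
  obtain ⟨C', hC'nn, hC'⟩ := polyGauss_bounded hb M
  refine Integrable.mono' ((integrable_exp_neg_mul_sq (half_pos hb)).const_mul (C * C'))
    ((hc.mul (by fun_prop)).aestronglyMeasurable) ?_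
  filter_upwards with x
  rw [norm_mul]
  have h1 : ‖((Real.exp (-b*x^2) : ℝ) : ℂ)‖ = Real.exp (-b*x^2) := by
    rw [Complex.norm_real, Real.norm_eq_abs, abs_of_pos (Real.exp_pos _)]
  rw [h1]
  calc ‖h x‖ * Real.exp (-b*x^2) ≤ (C * (1+|x|)^M) * Real.exp (-b*x^2) :=
        mul_le_mul_of_nonneg_right (hC x) (Real.exp_pos _).le
    _ = C * ((1+|x|)^M * Real.exp (-b*x^2)) := by ring
    _ ≤ C * (C' * Real.exp (-(b/2)*x^2)) := mul_le_mul_of_nonneg_left (hC' x) hCnn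
    _ = C * C' * Real.exp (-(b/2)*x^2) := by ring

lemma Poly1.tendsto_gauss_atTop {h : ℝ → ℂ} (hP : Poly1 h) {b : ℝ} (hb : 0 < b) :
    Tendsto (fun x => h x * ((Real.exp (-b*x^2) : ℝ) : ℂ)) atTop (𝓝 0) := by
  obtain ⟨hc, C, M, hCnn, hC⟩ := hP
  rw [tendsto_zero_iff_norm_tendsto_zero]
  have hCt : Tendsto (fun x : ℝ => C * ((1+|x|)^M * Real.exp (-b*x^2))) atTop (𝓝 0) := by
    simpa using (polyGauss_tendsto_atTop hb M).const_mul C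
  refine squeeze_zero (fun x => norm_nonneg _) (fun x => ?_) hCt
  rw [norm_mul]
  have h1 : ‖((Real.exp (-b*x^2) : ℝ) : ℂ)‖ = Real.exp (-b*x^2) := by
    rw [Complex.norm_real, Real.norm_eq_abs, abs_of_pos (Real.exp_pos _)]
  rw [h1]
  calc ‖h x‖ * Real.exp (-b*x^2) ≤ (C * (1+|x|)^M) * Real.exp (-b*x^2) :=
        mul_le_mul_of_nonneg_right (hC x) (Real.exp_pos _).le
    _ = C * ((1+|x|)^M * Real.exp (-b*x^2)) := by ring

lemma Poly1.tendsto_gauss_atBot {h : ℝ → ℂ} (hP : Poly1 h) {b : ℝ} (hb : 0 < b) :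
    Tendsto (fun x => h x * ((Real.exp (-b*x^2) : ℝ) : ℂ)) atBot (𝓝 0) := by
  obtain ⟨hc, C, M, hCnn, hC⟩ := hP
  rw [tendsto_zero_iff_norm_tendsto_zero]
  have hCt : Tendsto (fun x : ℝ => C * ((1+|x|)^M * Real.exp (-b*x^2))) atBot (𝓝 0) := by
    simpa using (polyGauss_tendsto_atBot hb M).const_mul C
  refine squeeze_zero (fun x => norm_nonneg _) (fun x => ?_) hCt
  rw [norm_mul]
  have h1 : ‖((Real.exp (-b*x^2) : ℝ) : ℂ)‖ = Real.exp (-b*x^2) := by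
    rw [Complex.norm_real, Real.norm_eq_abs, abs_of_pos (Real.exp_pos _)]
  rw [h1]
  calc ‖h x‖ * Real.exp (-b*x^2) ≤ (C * (1+|x|)^M) * Real.exp (-b*x^2) :=
        mul_le_mul_of_nonneg_right (hC x) (Real.exp_pos _).le
    _ = C * ((1+|x|)^M * Real.exp (-b*x^2)) := by ring


def Poly2 (h : ℝ × ℝ → ℂ) : Prop :=
  Continuous h ∧ ∃ C M, 0 ≤ C ∧ ∀ p : ℝ × ℝ, ‖h p‖ ≤ C * ((1+|p.1|)*(1+|p.2|))^M

lemma one_le_BB (x y : ℝ) : (1:ℝ) ≤ (1+|x|)*(1+|y|) := by nlinarith [abs_nonneg x, abs_nonneg y]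

lemma poly2_const (c : ℂ) : Poly2 (fun _ => c) :=
  ⟨continuous_const, ‖c‖, 0, norm_nonneg _, fun p => by simp⟩

lemma poly2_fst : Poly2 (fun p : ℝ × ℝ => (p.1:ℂ)) := by
  refine ⟨by fun_prop, 1, 1, zero_le_one, fun p => ?_⟩
  rw [Complex.norm_real, Real.norm_eq_abs]
  nlinarith [abs_nonneg p.1, abs_nonneg p.2]

lemma poly2_snd : Poly2 (fun p : ℝ × ℝ => (p.2:ℂ)) := by
  refine ⟨by fun_prop, 1, 1, zero_le_one, fun p => ?_⟩
  rw [Complex.norm_real, Real.norm_eq_abs]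
  nlinarith [abs_nonneg p.1, abs_nonneg p.2]

lemma Poly2.mul {f g : ℝ × ℝ → ℂ} (hf : Poly2 f) (hg : Poly2 g) : Poly2 (fun p => f p * g p) := by
  obtain ⟨cf, Cf, Mf, hCf0, hCf⟩ := hf
  obtain ⟨cg, Cg, Mg, hCg0, hCg⟩ := hg
  refine ⟨cf.mul cg, Cf*Cg, Mf+Mg, by positivity, fun p => ?_⟩
  rw [norm_mul, pow_add]
  calc ‖f p‖ * ‖g p‖ ≤ (Cf * ((1+|p.1|)*(1+|p.2|))^Mf) * (Cg * ((1+|p.1|)*(1+|p.2|))^Mg) :=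
        mul_le_mul (hCf p) (hCg p) (norm_nonneg _) (by positivity)
    _ = Cf*Cg * (((1+|p.1|)*(1+|p.2|))^Mf * ((1+|p.1|)*(1+|p.2|))^Mg) := by ring

lemma Poly2.add {f g : ℝ × ℝ → ℂ} (hf : Poly2 f) (hg : Poly2 g) : Poly2 (fun p => f p + g p) := by
  obtain ⟨cf, Cf, Mf, hCf0, hCf⟩ := hf
  obtain ⟨cg, Cg, Mg, hCg0, hCg⟩ := hg
  refine ⟨cf.add cg, Cf+Cg, Mf+Mg, by positivity, fun p => ?_⟩
  have hb := one_le_BB p.1 p.2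
  have e1 : ((1+|p.1|)*(1+|p.2|))^Mf ≤ ((1+|p.1|)*(1+|p.2|))^(Mf+Mg) :=
    pow_le_pow_right₀ hb (by omega)
  have e2 : ((1+|p.1|)*(1+|p.2|))^Mg ≤ ((1+|p.1|)*(1+|p.2|))^(Mf+Mg) :=
    pow_le_pow_right₀ hb (by omega)
  calc ‖f p + g p‖ ≤ ‖f p‖ + ‖g p‖ := norm_add_le _ _
    _ ≤ (Cf+Cg) * ((1+|p.1|)*(1+|p.2|))^(Mf+Mg) := by
        nlinarith [hCf p, hCg p, mul_le_mul_of_nonneg_left e1 hCf0,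
          mul_le_mul_of_nonneg_left e2 hCg0]

lemma Poly2.sub {f g : ℝ × ℝ → ℂ} (hf : Poly2 f) (hg : Poly2 g) : Poly2 (fun p => f p - g p) := by
  have := hf.add ((poly2_const (-1)).mul hg)
  simpa [sub_eq_add_neg, neg_one_mul] using this

lemma poly2_Fp (n : ℕ) : Poly2 (fun p : ℝ × ℝ => Fp ν α n p.1 p.2) := by
  obtain ⟨C, hC0, hC⟩ := Fp_bound (ν := ν) (α := α) n
  exact ⟨continuous_Fp n, C, n, hC0, fun p => hC p.1 p.2⟩

lemma poly2_Fp_neg (n : ℕ) : Poly2 (fun p : ℝ × ℝ => Fp ν α n p.1 (-p.2)) := by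
  obtain ⟨C, hC0, hC⟩ := Fp_bound (ν := ν) (α := α) n
  refine ⟨?_, C, n, hC0, fun p => ?_⟩
  · have hcn : Continuous fun p : ℝ × ℝ => (p.1, -p.2) := by fun_prop
    exact (continuous_Fp n).comp hcn
  · have := hC p.1 (-p.2)
    simpa [abs_neg] using this

lemma Poly2.integrable_gauss {h : ℝ × ℝ → ℂ} (hP : Poly2 h) {b1 b2 : ℝ}
    (hb1 : 0 < b1) (hb2 : 0 < b2) :
    Integrable (fun p : ℝ × ℝ =>
      h p * (((Real.exp (-b1*p.1^2) : ℝ) : ℂ) * ((Real.exp (-b2*p.2^2) : ℝ) : ℂ))) := by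
  obtain ⟨hc, C, M, hCnn, hC⟩ := hP
  obtain ⟨C1, h1nn, h1⟩ := polyGauss_bounded hb1 M
  obtain ⟨C2, h2nn, h2⟩ := polyGauss_bounded hb2 M
  have hint : Integrable (fun p : ℝ × ℝ =>
      (C*C1 * Real.exp (-(b1/2)*p.1^2)) * (C2 * Real.exp (-(b2/2)*p.2^2))) := by
    rw [MeasureTheory.Measure.volume_eq_prod ℝ ℝ]
    exact ((integrable_exp_neg_mul_sq (half_pos hb1)).const_mul (C*C1)).mul_prod
      ((integrable_exp_neg_mul_sq (half_pos hb2)).const_mul C2)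
  refine Integrable.mono' hint ((hc.mul (by fun_prop)).aestronglyMeasurable) ?_
  filter_upwards with p
  rw [norm_mul, norm_mul]
  have e1 : ‖((Real.exp (-b1*p.1^2) : ℝ) : ℂ)‖ = Real.exp (-b1*p.1^2) := by
    rw [Complex.norm_real, Real.norm_eq_abs, abs_of_pos (Real.exp_pos _)]
  have e2 : ‖((Real.exp (-b2*p.2^2) : ℝ) : ℂ)‖ = Real.exp (-b2*p.2^2) := by
    rw [Complex.norm_real, Real.norm_eq_abs, abs_of_pos (Real.exp_pos _)]
  rw [e1, e2]
  have key1 : (1+|p.1|)^M * Real.exp (-b1*p.1^2) ≤ C1 * Real.exp (-(b1/2)*p.1^2) := h1 p.1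
  have key2 : (1+|p.2|)^M * Real.exp (-b2*p.2^2) ≤ C2 * Real.exp (-(b2/2)*p.2^2) := h2 p.2
  calc ‖h p‖ * (Real.exp (-b1*p.1^2) * Real.exp (-b2*p.2^2))
      ≤ (C * ((1+|p.1|)*(1+|p.2|))^M) * (Real.exp (-b1*p.1^2) * Real.exp (-b2*p.2^2)) := by
        have := hC p
        have hpos : (0:ℝ) < Real.exp (-b1*p.1^2) * Real.exp (-b2*p.2^2) := by positivity
        nlinarith [norm_nonneg (h p)]
    _ = C * (((1+|p.1|)^M * Real.exp (-b1*p.1^2)) * ((1+|p.2|)^M * Real.exp (-b2*p.2^2))) := by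
        rw [mul_pow]; ring
    _ ≤ C * ((C1 * Real.exp (-(b1/2)*p.1^2)) * (C2 * Real.exp (-(b2/2)*p.2^2))) := by
        refine mul_le_mul_of_nonneg_left ?_ hCnn
        exact mul_le_mul key1 key2 (by positivity) (by positivity)
    _ = (C*C1 * Real.exp (-(b1/2)*p.1^2)) * (C2 * Real.exp (-(b2/2)*p.2^2)) := by ring

lemma ibp_aux {u v u' v' : ℝ → ℂ}
    (hu : ∀ x, HasDerivAt u (u' x) x) (hv : ∀ x, HasDerivAt v (v' x) x)
    (h1 : Integrable (fun x => u' x * v x)) (h2 : Integrable (fun x => u x * v' x))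
    (htop : Tendsto (fun x => u x * v x) atTop (𝓝 0))
    (hbot : Tendsto (fun x => u x * v x) atBot (𝓝 0)) :
    ∫ x : ℝ, u' x * v x = - ∫ x : ℝ, u x * v' x := by
  have hg : ∀ x, HasDerivAt (fun t => u t * v t) (u' x * v x + u x * v' x) x :=
    fun x => (hu x).mul (hv x)
  have hint : Integrable (fun x => u' x * v x + u x * v' x) := h1.add h2
  have hIic : ∫ x in Set.Iic (0:ℝ), (u' x * v x + u x * v' x) = u 0 * v 0 - 0 :=
    integral_Iic_of_hasDerivAt_of_tendsto' (fun x _ => hg x) hint.integrableOn hbot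
  have hIoi : ∫ x in Set.Ioi (0:ℝ), (u' x * v x + u x * v' x) = 0 - u 0 * v 0 :=
    integral_Ioi_of_hasDerivAt_of_tendsto' (fun x _ => hg x) hint.integrableOn htop
  have hsplit : ∫ x : ℝ, (u' x * v x + u x * v' x) = 0 := by
    have hunion : (Set.Iic (0:ℝ)) ∪ (Set.Ioi (0:ℝ)) = Set.univ := Set.Iic_union_Ioi
    have := MeasureTheory.setIntegral_union (f := fun x => u' x * v x + u x * v' x)
      (μ := volume) (Set.Iic_disjoint_Ioi (le_refl (0:ℝ))) measurableSet_Ioi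
      hint.integrableOn hint.integrableOn
    rw [hunion] at this
    rw [← MeasureTheory.setIntegral_univ, this, hIic, hIoi]
    ring
  have hadd := MeasureTheory.integral_add h1 h2
  rw [hsplit] at hadd
  linear_combination -hadd


noncomputable def Ex (ν α : ℝ) (x : ℝ) : ℂ := ((Real.exp (-(ν-2*α)*x^2) : ℝ) : ℂ)
noncomputable def Ey (ν α : ℝ) (y : ℝ) : ℂ := ((Real.exp (-(ν+2*α)*y^2) : ℝ) : ℂ)

noncomputable def Jint (ν α : ℝ) (m n : ℕ) : ℂ :=
  ∫ p : ℝ × ℝ, Fp ν α m p.1 p.2 * Fp ν α n p.1 (-p.2) * (Ex ν α p.1 * Ey ν α p.2)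

lemma poly1_Fp_slice (n : ℕ) (y : ℝ) : Poly1 (fun x => Fp ν α n x y) := by
  obtain ⟨C, hC0, hC⟩ := Fp_bound (ν := ν) (α := α) n
  refine ⟨?_, C*(1+|y|)^n, n, by positivity, fun x => ?_⟩
  · have hcn : Continuous fun x : ℝ => (x, y) := by fun_prop
    exact (continuous_Fp n).comp hcn
  · calc ‖Fp ν α n x y‖ ≤ C * ((1+|x|)*(1+|y|))^n := hC x y
      _ = C*(1+|y|)^n * (1+|x|)^n := by rw [mul_pow]; ring

lemma poly1_Fp_slice_x (n : ℕ) (x : ℝ) : Poly1 (fun y => Fp ν α n x y) := by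
  obtain ⟨C, hC0, hC⟩ := Fp_bound (ν := ν) (α := α) n
  refine ⟨?_, C*(1+|x|)^n, n, by positivity, fun y => ?_⟩
  · have hcn : Continuous fun y : ℝ => (x, y) := by fun_prop
    exact (continuous_Fp n).comp hcn
  · calc ‖Fp ν α n x y‖ ≤ C * ((1+|x|)*(1+|y|))^n := hC x y
      _ = C*(1+|x|)^n * (1+|y|)^n := by rw [mul_pow]; ring

lemma poly1_Fp_slice_negy (n : ℕ) (y : ℝ) : Poly1 (fun x => Fp ν α n x (-y)) :=
  poly1_Fp_slice n (-y)

lemma poly1_Fp_slice_negx (n : ℕ) (x : ℝ) : Poly1 (fun y => Fp ν α n x (-y)) := by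
  obtain ⟨hc, C, M, hC0, hC⟩ := poly1_Fp_slice_x (ν := ν) (α := α) n x
  refine ⟨?_, C, M, hC0, fun y => ?_⟩
  · have hcn : Continuous fun y : ℝ => -y := by fun_prop
    exact hc.comp hcn
  · simpa [abs_neg] using hC (-y)

lemma hasDerivAt_Ex (ν α : ℝ) (x : ℝ) :
    HasDerivAt (fun t : ℝ => Ex ν α t)
      ((-2*((ν:ℂ)-2*α)*x) * Ex ν α x) x := by
  have hE : HasDerivAt (fun t : ℝ => Real.exp (-(ν-2*α)*t^2))
      (Real.exp (-(ν-2*α)*x^2) * (-(ν-2*α)*(2*x^1))) x :=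
    ((hasDerivAt_pow 2 x).const_mul (-(ν-2*α))).exp
  have hEc := hE.ofReal_comp
  unfold Ex
  convert hEc using 1
  push_cast
  ring

lemma hasDerivAt_Ey (ν α : ℝ) (y : ℝ) :
    HasDerivAt (fun t : ℝ => Ey ν α t)
      ((-2*((ν:ℂ)+2*α)*y) * Ey ν α y) y := by
  have hE : HasDerivAt (fun t : ℝ => Real.exp (-(ν+2*α)*t^2))
      (Real.exp (-(ν+2*α)*y^2) * (-(ν+2*α)*(2*y^1))) y :=
    ((hasDerivAt_pow 2 y).const_mul (-(ν+2*α))).exp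
  have hEc := hE.ofReal_comp
  unfold Ey
  convert hEc using 1
  push_cast
  ring

lemma hasDerivAt_ux (m : ℕ) (y x : ℝ) :
    HasDerivAt (fun t : ℝ => Fp ν α m t y * Ex ν α t)
      ((((ν:ℂ)-2*α)*m*Fp ν α (m-1) x y - 2*((ν:ℂ)-2*α)*x*Fp ν α m x y) * Ex ν α x) x := by
  have h := (hasDerivAt_Fp_x (ν := ν) (α := α) m x y).mul (hasDerivAt_Ex ν α x)
  refine h.congr_deriv ?_
  ring

lemma hasDerivAt_uy (m : ℕ) (x y : ℝ) :
    HasDerivAt (fun t : ℝ => Fp ν α m x t * Ey ν α t)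
      ((-I*((ν:ℂ)+2*α)*m*Fp ν α (m-1) x y - 2*((ν:ℂ)+2*α)*y*Fp ν α m x y) * Ey ν α y) y := by
  have h := (hasDerivAt_Fp_y (ν := ν) (α := α) m x y).mul (hasDerivAt_Ey ν α y)
  refine h.congr_deriv ?_
  ring

lemma hasDerivAt_vy (k : ℕ) (x y : ℝ) :
    HasDerivAt (fun t : ℝ => Fp ν α k x (-t))
      (I*((ν:ℂ)+2*α)*k*Fp ν α (k-1) x (-y)) y := by
  have h := hasDerivAt_Fp_y (ν := ν) (α := α) k x (-y)
  have hneg : HasDerivAt (fun t : ℝ => -t) (-1) y := (hasDerivAt_id y).neg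
  have h2 := HasDerivAt.scomp y h hneg
  have : (fun t : ℝ => Fp ν α k x (-t)) = (fun t => Fp ν α k x t) ∘ (fun t : ℝ => -t) := rfl
  rw [this]
  refine h2.congr_deriv ?_
  simp only [neg_smul, one_smul]
  ring


lemma hb1_of (hν : 0 < ν) (hνα : 2 * |α| < ν) : 0 < ν - 2*α := by
  cases abs_cases α <;> linarith

lemma hb2_of (hν : 0 < ν) (hνα : 2 * |α| < ν) : 0 < ν + 2*α := by
  cases abs_cases α <;> linarith

lemma ibp_x (hν : 0 < ν) (hνα : 2 * |α| < ν) (m k : ℕ) (y : ℝ) :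
    ∫ x : ℝ, ((((ν:ℂ)-2*α)*m*Fp ν α (m-1) x y - 2*((ν:ℂ)-2*α)*x*Fp ν α m x y) * Ex ν α x)
        * (Fp ν α k x (-y) * Ey ν α y)
      = - ∫ x : ℝ, (Fp ν α m x y * Ex ν α x)
          * ((((ν:ℂ)-2*α)*k*Fp ν α (k-1) x (-y)) * Ey ν α y) := by
  have hb1 := hb1_of hν hνα
  have hp1 : Poly1 (fun x : ℝ =>
      (((ν:ℂ)-2*α)*m*Fp ν α (m-1) x y - 2*((ν:ℂ)-2*α)*x*Fp ν α m x y)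
        * (Fp ν α k x (-y) * Ey ν α y)) :=
    (((poly1_const (((ν:ℂ)-2*α)*m)).mul (poly1_Fp_slice (m-1) y)).sub
      (((poly1_const (2*((ν:ℂ)-2*α))).mul poly1_coe).mul (poly1_Fp_slice m y))).mul
      ((poly1_Fp_slice_negy k y).mul (poly1_const (Ey ν α y)))
  have hp2 : Poly1 (fun x : ℝ =>
      Fp ν α m x y * ((((ν:ℂ)-2*α)*k*Fp ν α (k-1) x (-y)) * Ey ν α y)) :=
    (poly1_Fp_slice m y).mul
      (((poly1_const (((ν:ℂ)-2*α)*k)).mul (poly1_Fp_slice_negy (k-1) y)).mul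
        (poly1_const (Ey ν α y)))
  have hp3 : Poly1 (fun x : ℝ => Fp ν α m x y * (Fp ν α k x (-y) * Ey ν α y)) :=
    (poly1_Fp_slice m y).mul ((poly1_Fp_slice_negy k y).mul (poly1_const (Ey ν α y)))
  apply ibp_aux (u := fun x => Fp ν α m x y * Ex ν α x)
    (v := fun x => Fp ν α k x (-y) * Ey ν α y)
  · exact fun x => hasDerivAt_ux m y x
  · exact fun x => (hasDerivAt_Fp_x (ν := ν) (α := α) k x (-y)).mul_const (Ey ν α y)
  · refine (hp1.integrable_gauss hb1).congr (Filter.Eventually.of_forall fun x => ?_)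
    unfold Ex; ring
  · refine (hp2.integrable_gauss hb1).congr (Filter.Eventually.of_forall fun x => ?_)
    unfold Ex; ring
  · refine (hp3.tendsto_gauss_atTop hb1).congr fun x => ?_
    unfold Ex; ring
  · refine (hp3.tendsto_gauss_atBot hb1).congr fun x => ?_
    unfold Ex; ring

lemma ibp_y (hν : 0 < ν) (hνα : 2 * |α| < ν) (m k : ℕ) (x : ℝ) :
    ∫ y : ℝ, ((-I*((ν:ℂ)+2*α)*m*Fp ν α (m-1) x y - 2*((ν:ℂ)+2*α)*y*Fp ν α m x y) * Ey ν α y)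
        * (Fp ν α k x (-y) * Ex ν α x)
      = - ∫ y : ℝ, (Fp ν α m x y * Ey ν α y)
          * ((I*((ν:ℂ)+2*α)*k*Fp ν α (k-1) x (-y)) * Ex ν α x) := by
  have hb2 := hb2_of hν hνα
  have hp1 : Poly1 (fun y : ℝ =>
      (-I*((ν:ℂ)+2*α)*m*Fp ν α (m-1) x y - 2*((ν:ℂ)+2*α)*y*Fp ν α m x y)
        * (Fp ν α k x (-y) * Ex ν α x)) :=
    (((poly1_const (-I*((ν:ℂ)+2*α)*m)).mul (poly1_Fp_slice_x (m-1) x)).sub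
      (((poly1_const (2*((ν:ℂ)+2*α))).mul poly1_coe).mul (poly1_Fp_slice_x m x))).mul
      ((poly1_Fp_slice_negx k x).mul (poly1_const (Ex ν α x)))
  have hp2 : Poly1 (fun y : ℝ =>
      Fp ν α m x y * ((I*((ν:ℂ)+2*α)*k*Fp ν α (k-1) x (-y)) * Ex ν α x)) :=
    (poly1_Fp_slice_x m x).mul
      (((poly1_const (I*((ν:ℂ)+2*α)*k)).mul (poly1_Fp_slice_negx (k-1) x)).mul
        (poly1_const (Ex ν α x)))
  have hp3 : Poly1 (fun y : ℝ => Fp ν α m x y * (Fp ν α k x (-y) * Ex ν α x)) :=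
    (poly1_Fp_slice_x m x).mul ((poly1_Fp_slice_negx k x).mul (poly1_const (Ex ν α x)))
  apply ibp_aux (u := fun y => Fp ν α m x y * Ey ν α y)
    (v := fun y => Fp ν α k x (-y) * Ex ν α x)
  · exact fun y => hasDerivAt_uy m x y
  · exact fun y => (hasDerivAt_vy (ν := ν) (α := α) k x y).mul_const (Ex ν α x)
  · refine (hp1.integrable_gauss hb2).congr (Filter.Eventually.of_forall fun y => ?_)
    unfold Ey; ring
  · refine (hp2.integrable_gauss hb2).congr (Filter.Eventually.of_forall fun y => ?_)
    unfold Ey; ring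
  · refine (hp3.tendsto_gauss_atTop hb2).congr fun y => ?_
    unfold Ey; ring
  · refine (hp3.tendsto_gauss_atBot hb2).congr fun y => ?_
    unfold Ey; ring


lemma Jint_rec (hν : 0 < ν) (hνα : 2 * |α| < ν) (m k : ℕ) :
    Jint ν α (m+1) k = (ν:ℂ) * k * Jint ν α m (k-1) := by
  have hb1 := hb1_of hν hνα
  have hb2 := hb2_of hν hνα
  have hX1 : Integrable (fun p : ℝ × ℝ =>
      ((((ν:ℂ)-2*α)*m*Fp ν α (m-1) p.1 p.2 - 2*((ν:ℂ)-2*α)*p.1*Fp ν α m p.1 p.2) * Ex ν α p.1)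
        * (Fp ν α k p.1 (-p.2) * Ey ν α p.2)) := by
    refine (((((poly2_const (((ν:ℂ)-2*α)*m)).mul (poly2_Fp (ν := ν) (α := α) (m-1))).sub
        (((poly2_const (2*((ν:ℂ)-2*α))).mul poly2_fst).mul (poly2_Fp (ν := ν) (α := α) m))).mul
        (poly2_Fp_neg (ν := ν) (α := α) k)).integrable_gauss hb1 hb2).congr
      (Filter.Eventually.of_forall fun p => ?_)
    unfold Ex Ey; ring
  have hX2 : Integrable (fun p : ℝ × ℝ =>
      (Fp ν α m p.1 p.2 * Ex ν α p.1)
        * ((((ν:ℂ)-2*α)*k*Fp ν α (k-1) p.1 (-p.2)) * Ey ν α p.2)) := by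
    refine (((poly2_Fp (ν := ν) (α := α) m).mul ((poly2_const (((ν:ℂ)-2*α)*k)).mul
        (poly2_Fp_neg (ν := ν) (α := α) (k-1)))).integrable_gauss hb1 hb2).congr
      (Filter.Eventually.of_forall fun p => ?_)
    unfold Ex Ey; ring
  have hY1 : Integrable (fun p : ℝ × ℝ =>
      ((-I*((ν:ℂ)+2*α)*m*Fp ν α (m-1) p.1 p.2 - 2*((ν:ℂ)+2*α)*p.2*Fp ν α m p.1 p.2) * Ey ν α p.2)
        * (Fp ν α k p.1 (-p.2) * Ex ν α p.1)) := by
    refine (((((poly2_const (-I*((ν:ℂ)+2*α)*m)).mul (poly2_Fp (ν := ν) (α := α) (m-1))).sub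
        (((poly2_const (2*((ν:ℂ)+2*α))).mul poly2_snd).mul (poly2_Fp (ν := ν) (α := α) m))).mul
        (poly2_Fp_neg (ν := ν) (α := α) k)).integrable_gauss hb1 hb2).congr
      (Filter.Eventually.of_forall fun p => ?_)
    unfold Ex Ey; ring
  have hY2 : Integrable (fun p : ℝ × ℝ =>
      (Fp ν α m p.1 p.2 * Ey ν α p.2)
        * ((I*((ν:ℂ)+2*α)*k*Fp ν α (k-1) p.1 (-p.2)) * Ex ν α p.1)) := by
    refine (((poly2_Fp (ν := ν) (α := α) m).mul ((poly2_const (I*((ν:ℂ)+2*α)*k)).mul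
        (poly2_Fp_neg (ν := ν) (α := α) (k-1)))).integrable_gauss hb1 hb2).congr
      (Filter.Eventually.of_forall fun p => ?_)
    unfold Ex Ey; ring
  have claimA : (∫ p : ℝ × ℝ,
        ((((ν:ℂ)-2*α)*m*Fp ν α (m-1) p.1 p.2 - 2*((ν:ℂ)-2*α)*p.1*Fp ν α m p.1 p.2) * Ex ν α p.1)
          * (Fp ν α k p.1 (-p.2) * Ey ν α p.2))
      = - ∫ p : ℝ × ℝ, (Fp ν α m p.1 p.2 * Ex ν α p.1)
          * ((((ν:ℂ)-2*α)*k*Fp ν α (k-1) p.1 (-p.2)) * Ey ν α p.2) := by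
    rw [show (volume : Measure (ℝ × ℝ)) = (volume : Measure ℝ).prod volume from rfl]
    rw [integral_prod_symm _ hX1, integral_prod_symm _ hX2]
    dsimp only
    simp only [ibp_x hν hνα m k]
    rw [integral_neg]
  have claimB : (∫ p : ℝ × ℝ,
        ((-I*((ν:ℂ)+2*α)*m*Fp ν α (m-1) p.1 p.2 - 2*((ν:ℂ)+2*α)*p.2*Fp ν α m p.1 p.2) * Ey ν α p.2)
          * (Fp ν α k p.1 (-p.2) * Ex ν α p.1))
      = - ∫ p : ℝ × ℝ, (Fp ν α m p.1 p.2 * Ey ν α p.2)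
          * ((I*((ν:ℂ)+2*α)*k*Fp ν α (k-1) p.1 (-p.2)) * Ex ν α p.1) := by
    rw [show (volume : Measure (ℝ × ℝ)) = (volume : Measure ℝ).prod volume from rfl]
    rw [integral_prod _ hY1, integral_prod _ hY2]
    dsimp only
    simp only [ibp_y hν hνα m k]
    rw [integral_neg]
  have hpt : ∀ p : ℝ × ℝ,
      Fp ν α (m+1) p.1 p.2 * Fp ν α k p.1 (-p.2) * (Ex ν α p.1 * Ey ν α p.2)
      = (-(1/2:ℂ)) * (((((ν:ℂ)-2*α)*m*Fp ν α (m-1) p.1 p.2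
            - 2*((ν:ℂ)-2*α)*p.1*Fp ν α m p.1 p.2) * Ex ν α p.1)
          * (Fp ν α k p.1 (-p.2) * Ey ν α p.2))
        + (I/2) * (((-I*((ν:ℂ)+2*α)*m*Fp ν α (m-1) p.1 p.2
            - 2*((ν:ℂ)+2*α)*p.2*Fp ν α m p.1 p.2) * Ey ν α p.2)
          * (Fp ν α k p.1 (-p.2) * Ex ν α p.1)) := by
    intro p
    rw [Fp_succ m p.1 p.2]
    linear_combination ((1/2)*((ν:ℂ)+2*α)*(m:ℂ)*Fp ν α (m-1) p.1 p.2
      * Fp ν α k p.1 (-p.2) * Ex ν α p.1 * Ey ν α p.2) * Complex.I_sq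
  have main : Jint ν α (m+1) k
      = (-(1/2:ℂ)) * (∫ p : ℝ × ℝ,
          ((((ν:ℂ)-2*α)*m*Fp ν α (m-1) p.1 p.2 - 2*((ν:ℂ)-2*α)*p.1*Fp ν α m p.1 p.2) * Ex ν α p.1)
            * (Fp ν α k p.1 (-p.2) * Ey ν α p.2))
        + (I/2) * (∫ p : ℝ × ℝ,
          ((-I*((ν:ℂ)+2*α)*m*Fp ν α (m-1) p.1 p.2 - 2*((ν:ℂ)+2*α)*p.2*Fp ν α m p.1 p.2) * Ey ν α p.2)
            * (Fp ν α k p.1 (-p.2) * Ex ν α p.1)) := by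
    unfold Jint
    rw [integral_congr_ae (Filter.Eventually.of_forall hpt)]
    rw [integral_add (hX1.const_mul _) (hY1.const_mul _), integral_const_mul, integral_const_mul]
  have eX2 : (∫ p : ℝ × ℝ, (Fp ν α m p.1 p.2 * Ex ν α p.1)
        * ((((ν:ℂ)-2*α)*k*Fp ν α (k-1) p.1 (-p.2)) * Ey ν α p.2))
      = ((ν:ℂ)-2*α) * k * Jint ν α m (k-1) := by
    unfold Jint
    rw [← integral_const_mul]
    refine integral_congr_ae (Filter.Eventually.of_forall fun p => ?_)
    ring
  have eY2 : (∫ p : ℝ × ℝ, (Fp ν α m p.1 p.2 * Ey ν α p.2)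
        * ((I*((ν:ℂ)+2*α)*k*Fp ν α (k-1) p.1 (-p.2)) * Ex ν α p.1))
      = I*((ν:ℂ)+2*α) * k * Jint ν α m (k-1) := by
    unfold Jint
    rw [← integral_const_mul]
    refine integral_congr_ae (Filter.Eventually.of_forall fun p => ?_)
    ring
  rw [main, claimA, claimB, eX2, eY2]
  linear_combination (-(1/2)*((ν:ℂ)+2*α)*(k:ℂ)*Jint ν α m (k-1)) * Complex.I_sq


lemma integral_ofReal'' {f : ℝ → ℝ} : (∫ x : ℝ, ((f x : ℝ) : ℂ)) = ((∫ x : ℝ, f x : ℝ) : ℂ) :=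
  integral_ofReal

lemma Jint_conj (m n : ℕ) : Jint ν α n m = (starRingEnd ℂ) (Jint ν α m n) := by
  unfold Jint
  rw [← integral_conj]
  refine integral_congr_ae (Filter.Eventually.of_forall fun p => ?_)
  simp only [map_mul, conj_Fp, neg_neg]
  unfold Ex Ey
  simp only [Complex.conj_ofReal]
  ring

lemma Jint_zero_zero (hν : 0 < ν) (hνα : 2 * |α| < ν) :
    Jint ν α 0 0 = ((Real.pi / Real.sqrt (ν^2 - 4*α^2) : ℝ) : ℂ) := by
  have hb1 := hb1_of hν hνα
  have hb2 := hb2_of hν hνα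
  unfold Jint
  simp only [Fp_zero, one_mul]
  rw [show (volume : Measure (ℝ × ℝ)) = (volume : Measure ℝ).prod volume from rfl]
  rw [integral_prod_mul (f := fun x => Ex ν α x) (g := fun y => Ey ν α y)]
  unfold Ex Ey
  rw [integral_ofReal'', integral_ofReal'', integral_gaussian, integral_gaussian]
  rw [← Complex.ofReal_mul]
  congr 1
  rw [← Real.sqrt_mul (by positivity)]
  have h1 : Real.pi/(ν-2*α) * (Real.pi/(ν+2*α)) = Real.pi^2 / (ν^2-4*α^2) := by
    rw [div_mul_div_comm, show Real.pi*Real.pi = Real.pi^2 from by ring,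
      show (ν-2*α)*(ν+2*α) = ν^2-4*α^2 from by ring]
  rw [h1, Real.sqrt_div (sq_nonneg _), Real.sqrt_sq Real.pi_pos.le]

lemma Jint_diag (hν : 0 < ν) (hνα : 2 * |α| < ν) (n : ℕ) :
    Jint ν α n n
      = ((Real.pi * ν^n * n.factorial / Real.sqrt (ν^2 - 4*α^2) : ℝ) : ℂ) := by
  induction n with
  | zero => simpa using Jint_zero_zero hν hνα
  | succ n ih =>
    have h := Jint_rec hν hνα n (n+1)
    simp only [Nat.add_sub_cancel] at h
    rw [h, ih, Nat.factorial_succ]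
    push_cast
    ring

lemma Jint_off (hν : 0 < ν) (hνα : 2 * |α| < ν) (d : ℕ) :
    ∀ n : ℕ, Jint ν α (n+d+1) n = 0 := by
  intro n
  induction n with
  | zero =>
    have h := Jint_rec hν hνα (d) 0
    simpa using h
  | succ n ih =>
    have h := Jint_rec hν hνα (n+d+1) (n+1)
    simp only [Nat.add_sub_cancel] at h
    have he : n+1+d+1 = n+d+1+1 := by omega
    rw [he, h, ih]
    ring

lemma Jint_eq (hν : 0 < ν) (hνα : 2 * |α| < ν) (m n : ℕ) :
    Jint ν α m n
      = ((Real.pi * ν^n * n.factorial / Real.sqrt (ν^2 - 4*α^2) : ℝ) : ℂ)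
        * (if m = n then 1 else 0) := by
  rcases lt_trichotomy m n with h | h | h
  · rw [if_neg (by omega), mul_zero]
    have hd : m + (n - m - 1) + 1 = n := by omega
    have h0 : Jint ν α n m = 0 := by
      have := Jint_off hν hνα (n - m - 1) m
      rwa [hd] at this
    rw [Jint_conj m n] at h0
    have := congrArg (starRingEnd ℂ) h0
    simpa using this
  · rw [h, if_pos rfl, mul_one]
    exact Jint_diag hν hνα n
  · rw [if_neg (by omega), mul_zero]
    have hd : n + (m - n - 1) + 1 = m := by omega
    have := Jint_off hν hνα (m - n - 1) n
    rwa [hd] at this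


lemma hexp_eq (ν α x y : ℝ) :
    Complex.exp (-(ν : ℂ) * ((‖(⟨x, y⟩ : ℂ)‖ : ℝ) : ℂ) ^ 2
        + (α : ℂ) * ((⟨x, y⟩ : ℂ) ^ 2 + (starRingEnd ℂ (⟨x, y⟩ : ℂ)) ^ 2))
      = Ex ν α x * Ey ν α y := by
  have hz : (⟨x, y⟩ : ℂ) = (x : ℂ) + (y : ℂ) * I := Complex.mk_eq_add_mul_I x y
  have habs : ((‖(⟨x, y⟩ : ℂ)‖ : ℝ) : ℂ)^2 = (x:ℂ)^2 + (y:ℂ)^2 := by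
    rw [← Complex.ofReal_pow, Complex.sq_norm, Complex.normSq_mk]
    push_cast; ring
  have hconj : starRingEnd ℂ (⟨x, y⟩ : ℂ) = (x:ℂ) - (y:ℂ) * I := by
    rw [hz, map_add, map_mul, Complex.conj_ofReal, Complex.conj_ofReal, Complex.conj_I]
    ring
  have harg : -(ν : ℂ) * ((‖(⟨x, y⟩ : ℂ)‖ : ℝ) : ℂ) ^ 2
      + (α : ℂ) * ((⟨x, y⟩ : ℂ) ^ 2 + (starRingEnd ℂ (⟨x, y⟩ : ℂ)) ^ 2)
      = ((-(ν-2*α)*x^2 + -(ν+2*α)*y^2 : ℝ) : ℂ) := by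
    rw [habs, hconj, hz]
    push_cast
    linear_combination (2*(α:ℂ)*(y:ℂ)^2) * Complex.I_sq
  rw [harg, ← Complex.ofReal_exp, Real.exp_add, Complex.ofReal_mul]
  rfl

end Stmt8

open Stmt8 in
theorem stmt8 (ν α : ℝ) (hν : 0 < ν) (hνα : 2 * |α| < ν) (m n : ℕ) :
    ∫ z : ℂ,
        Ic (ν : ℂ) (α : ℂ) 0 z (starRingEnd ℂ z) m *
          starRingEnd ℂ (Ic (ν : ℂ) (α : ℂ) 0 z (starRingEnd ℂ z) n) *
          Complex.exp (-(ν : ℂ) * ((‖z‖ : ℝ) : ℂ) ^ 2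
            + (α : ℂ) * (z ^ 2 + (starRingEnd ℂ z) ^ 2)) =
      ((Real.pi * ν ^ n * n.factorial / Real.sqrt (ν ^ 2 - 4 * α ^ 2) : ℝ) : ℂ) *
        (if m = n then 1 else 0) := by
  have key := (Complex.volume_preserving_equiv_real_prod.symm).integral_comp
    Complex.measurableEquivRealProd.symm.measurableEmbedding
    (fun z : ℂ =>
      Ic (ν : ℂ) (α : ℂ) 0 z (starRingEnd ℂ z) m *
        starRingEnd ℂ (Ic (ν : ℂ) (α : ℂ) 0 z (starRingEnd ℂ z) n) *
        Complex.exp (-(ν : ℂ) * ((‖z‖ : ℝ) : ℂ) ^ 2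
          + (α : ℂ) * (z ^ 2 + (starRingEnd ℂ z) ^ 2)))
  rw [← key]
  have hJ : (∫ p : ℝ × ℝ,
      Ic (ν : ℂ) (α : ℂ) 0 (Complex.measurableEquivRealProd.symm p)
          (starRingEnd ℂ (Complex.measurableEquivRealProd.symm p)) m *
        starRingEnd ℂ (Ic (ν : ℂ) (α : ℂ) 0 (Complex.measurableEquivRealProd.symm p)
          (starRingEnd ℂ (Complex.measurableEquivRealProd.symm p)) n) *
        Complex.exp (-(ν : ℂ) * ((‖Complex.measurableEquivRealProd.symm p‖ : ℝ) : ℂ) ^ 2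
          + (α : ℂ) * ((Complex.measurableEquivRealProd.symm p) ^ 2
            + (starRingEnd ℂ (Complex.measurableEquivRealProd.symm p)) ^ 2)))
      = Jint ν α m n := by
    unfold Jint
    refine integral_congr_ae (Filter.Eventually.of_forall fun p => ?_)
    obtain ⟨x, y⟩ := p
    simp only [Complex.measurableEquivRealProd_symm_apply]
    have hz : (⟨x, y⟩ : ℂ) = (x : ℂ) + (y : ℂ) * I := Complex.mk_eq_add_mul_I x y
    have hcz1 : starRingEnd ℂ ((x:ℂ) + (y:ℂ) * I) = (x:ℂ) - (y:ℂ) * I := by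
      rw [map_add, map_mul, Complex.conj_ofReal, Complex.conj_ofReal, Complex.conj_I]
      ring
    have hcz2 : starRingEnd ℂ ((x:ℂ) - (y:ℂ) * I) = (x:ℂ) + (y:ℂ) * I := by
      rw [map_sub, map_mul, Complex.conj_ofReal, Complex.conj_ofReal, Complex.conj_I]
      ring
    rw [hexp_eq ν α x y, hz, hcz1, conj_Ic, hcz1, hcz2]
    unfold Fp
    push_cast
    ring_nf
  rw [hJ, Jint_eq hν hνα m n]
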